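/- Let a ∈ C¹([0,1]) with a > 0, and f ∈ C¹([0,∞)) satisfy (f_eq) and (f_sgn). For each n ∈ ℕ let u_n be a classical solution of (P_n), and assume sup_n ‖u_n‖_{L∞(0,1)} < ∞ and that v_n := φ_n(u_n') → v uniformly on [0,1]. Let [α,β] ⊆ [0,1] with α < β be such that |v(x)| ≤ 1 − ε on [α,β] for some ε > 0, and suppose u_n → u uniformly on [α,β]. Then a subsequence of (u_n) converges to u in C¹([α,β]); in particular, u ∈ C¹([α,β]) and u' = φ^{−1}(v) on [α,β]. -/

import Mathlib

open Set MeasureTheory Filter Topology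

noncomputable section

/-- `φ(s) = s / √(1+s²)`. -/
def phi (s : ℝ) : ℝ := s / Real.sqrt (1 + s ^ 2)

/-- `φ'(s) = (1+s²)^(-3/2)`. -/
def phiD (s : ℝ) : ℝ := 1 / (Real.sqrt (1 + s ^ 2)) ^ 3

/-- the inverse of `φ`, a bijection of `(-1,1)` onto `ℝ`. -/
def phiInv (y : ℝ) : ℝ := y / Real.sqrt (1 - y ^ 2)

/-- the approximation `φₙ`: equal to `φ` on `[-n,n]`, affine outside. -/
def phiN (n : ℕ) (s : ℝ) : ℝ :=
  if (n : ℝ) < s then phi n + phiD n * (s - n)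
  else if s < -(n : ℝ) then -phi n + phiD n * (s + n)
  else phi s


lemma sqrt_one_add_sq_pos (s : ℝ) : 0 < Real.sqrt (1 + s ^ 2) :=
  Real.sqrt_pos.2 (by positivity)

lemma phiInv_phi (s : ℝ) : phiInv (phi s) = s := by
  have h1 : (0:ℝ) < 1 + s ^ 2 := by positivity
  have hr := sqrt_one_add_sq_pos s
  have hsq : Real.sqrt (1 + s ^ 2) ^ 2 = 1 + s ^ 2 := Real.sq_sqrt h1.le
  have h3 : Real.sqrt (1 - (s / Real.sqrt (1 + s ^ 2)) ^ 2) = 1 / Real.sqrt (1 + s ^ 2) := by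
    rw [div_pow, hsq, show 1 - s ^ 2 / (1 + s ^ 2) = 1 / (1 + s ^ 2) by field_simp; ring,
      one_div, one_div, Real.sqrt_inv]
  unfold phiInv phi
  rw [h3]
  field_simp

lemma phiD_pos (s : ℝ) : 0 < phiD s := by
  unfold phiD; positivity

lemma phi_nat_ge (n : ℕ) : 1 - 1 / ((n : ℝ) + 1) ≤ phi n := by
  have hle : Real.sqrt (1 + (n:ℝ) ^ 2) ≤ (n:ℝ) + 1 := by
    rw [show (1 : ℝ) + (n:ℝ)^2 = ((n:ℝ)+1)^2 - 2*n by ring]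
    calc Real.sqrt (((n:ℝ)+1)^2 - 2*n) ≤ Real.sqrt (((n:ℝ)+1)^2) := by
          apply Real.sqrt_le_sqrt; nlinarith [Nat.cast_nonneg (α := ℝ) n]
      _ = (n:ℝ) + 1 := Real.sqrt_sq (by positivity)
  have hr := sqrt_one_add_sq_pos (n:ℝ)
  have h1 : (0:ℝ) < (n:ℝ) + 1 := by positivity
  have h2 : (n:ℝ) / ((n:ℝ)+1) ≤ phi n := by
    unfold phi
    exact div_le_div_of_nonneg_left (Nat.cast_nonneg n) hr hle
  calc 1 - 1/((n:ℝ)+1) = (n:ℝ)/((n:ℝ)+1) := by field_simp; ring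
    _ ≤ phi n := h2

lemma phiN_inv {n : ℕ} {s c : ℝ} (h : |phiN n s| ≤ c) (hc : c < phi n) :
    s = phiInv (phiN n s) := by
  have heq : phiN n s = phi s := by
    unfold phiN at h ⊢
    rcases lt_or_ge (n:ℝ) s with hns | hns
    · exfalso
      have hlt : phi n < phi n + phiD n * (s - n) := by nlinarith [phiD_pos (n:ℝ)]
      rw [if_pos hns] at h
      have := le_abs_self (phi (n:ℝ) + phiD (n:ℝ) * (s - (n:ℝ)))
      linarith
    rcases lt_or_ge s (-(n:ℝ)) with hsn | hsn
    · exfalso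
      rw [if_neg (not_lt.2 hns), if_pos hsn] at h
      have hlt : -phi n + phiD n * (s + n) < -phi n := by nlinarith [phiD_pos (n:ℝ)]
      have h4 := neg_abs_le (-phi (n:ℝ) + phiD (n:ℝ) * (s + (n:ℝ)))
      have hn0 : (0:ℝ) ≤ phi n := by
        have h5 := phi_nat_ge n
        have h6 : (1:ℝ)/((n:ℝ)+1) ≤ 1 := by
          rw [div_le_one (by positivity)]; linarith [Nat.cast_nonneg (α := ℝ) n]
        linarith
      have hc0 : 0 ≤ c := le_trans (abs_nonneg _) h
      linarith
    · rw [if_neg (not_lt.2 hns), if_neg (not_lt.2 hsn)]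
  rw [heq, phiInv_phi]

/-- `Φ(s) = √(1+s²) - 1`. -/
def PhiBig (s : ℝ) : ℝ := Real.sqrt (1 + s ^ 2) - 1

/-- `Φₙ(s) = ∫₀ˢ φₙ`. -/
def PhiNBig (n : ℕ) (s : ℝ) : ℝ := ∫ t in (0:ℝ)..s, phiN n t

/-- the extension `f̂` of `f` vanishing on the negatives. -/
def fhat (f : ℝ → ℝ) (s : ℝ) : ℝ := if s < 0 then 0 else f s

/-- `F(s) = ∫_{u0}^s f`. -/
def Fprim (f : ℝ → ℝ) (u0 s : ℝ) : ℝ := ∫ t in u0..s, f t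

/-- assumption `(f_eq)`. -/
def Feq (f : ℝ → ℝ) (u0 : ℝ) : Prop := f 0 = 0 ∧ f u0 = 0

/-- assumption `(f_sgn)`. -/
def Fsgn (f : ℝ → ℝ) (u0 : ℝ) : Prop :=
  (∀ s, 0 < s → s < u0 → f s < 0) ∧ (∀ s, u0 < s → 0 < f s)

/-- the constant `C_a`. -/
def Ca (a : ℝ → ℝ) : ℝ :=
  max ((a 1 / a 0) * Real.exp (∫ x in (0:ℝ)..1, max (-deriv a x) 0 / a x))
      ((a 0 / a 1) * Real.exp (∫ x in (0:ℝ)..1, max (deriv a x) 0 / a x))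

/-- assumption `(f_ap)`, with the value `ū` made explicit. -/
def Fap (a f : ℝ → ℝ) (u0 ubar : ℝ) : Prop :=
  u0 < ubar ∧ (∫ s in u0..ubar, f s) = Ca a * ∫ s in u0..(0:ℝ), f s

/-- assumption `(f_ap)'`. -/
def Fap' (a f : ℝ → ℝ) : Prop :=
  (∫ x in (0:ℝ)..1, a x) * sSup ((fun s => max (-f s) 0) '' Ici 0) < 1

/-- classical solution of the approximated Neumann problem `(Pₙ)`. -/
def IsPnSol (a f : ℝ → ℝ) (n : ℕ) (u : ℝ → ℝ) : Prop :=
  ContDiff ℝ 2 u ∧ (∀ x ∈ Ioo (0:ℝ) 1, 0 < u x) ∧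
  deriv u 0 = 0 ∧ deriv u 1 = 0 ∧
  ∀ x ∈ Ioo (0:ℝ) 1, -deriv (fun y => phiN n (deriv u y)) x = a x * f (u x)

/-- classical solution of the prescribed mean curvature Neumann problem `(P)`. -/
def IsPSol (a f : ℝ → ℝ) (u : ℝ → ℝ) : Prop :=
  ContDiff ℝ 2 u ∧ (∀ x ∈ Ioo (0:ℝ) 1, 0 < u x) ∧
  deriv u 0 = 0 ∧ deriv u 1 = 0 ∧
  ∀ x ∈ Ioo (0:ℝ) 1, -deriv (fun y => phi (deriv u y)) x = a x * f (u x)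

/-- solution of the Cauchy problem with initial datum `d`. -/
def IsCauchySol (a f : ℝ → ℝ) (n : ℕ) (d : ℝ) (u : ℝ → ℝ) : Prop :=
  ContDiff ℝ 2 u ∧ u 0 = d ∧ deriv u 0 = 0 ∧
  ∀ x ∈ Ioo (0:ℝ) 1, -deriv (fun y => phiN n (deriv u y)) x = a x * fhat f (u x)

/-- `θ` is a (clockwise) angular variable for `(u - u0, φₙ(u'))` around `(u0,0)`. -/
def IsAngle (n : ℕ) (u0 : ℝ) (u θ : ℝ → ℝ) : Prop :=
  ContinuousOn θ (Icc 0 1) ∧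
  ∀ x ∈ Icc (0:ℝ) 1,
    u x - u0 = Real.sqrt ((u x - u0) ^ 2 + phiN n (deriv u x) ^ 2) * Real.cos (θ x) ∧
    phiN n (deriv u x) = -(Real.sqrt ((u x - u0) ^ 2 + phiN n (deriv u x) ^ 2) * Real.sin (θ x))

/-- non-constant on `(0,1)`. -/
def Nonconstant (u : ℝ → ℝ) : Prop := ∃ x ∈ Ioo (0:ℝ) 1, ∃ y ∈ Ioo (0:ℝ) 1, u x ≠ u y

/-- the set of points of `(0,1)` where `u` takes the value `u0`. -/
def zeroSet (u : ℝ → ℝ) (u0 : ℝ) : Set ℝ := {x | x ∈ Ioo (0:ℝ) 1 ∧ u x = u0}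

/-- the hypothesis `f'(u0) > λ_{k+1}`: there is `λ̄ < f'(u0)` admitting a nontrivial Neumann
eigenfunction of `-w'' = λ̄ a w` with exactly `k` zeros in `(0,1)`. -/
def EigenHyp (a f : ℝ → ℝ) (u0 : ℝ) (k : ℕ) : Prop :=
  ∃ lam : ℝ, ∃ w : ℝ → ℝ, lam < deriv f u0 ∧ ContDiff ℝ 2 w ∧
    (∃ x ∈ Icc (0:ℝ) 1, w x ≠ 0) ∧
    (∀ x ∈ Ioo (0:ℝ) 1, -deriv (deriv w) x = lam * a x * w x) ∧
    deriv w 0 = 0 ∧ deriv w 1 = 0 ∧ (zeroSet w 0).ncard = k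

/-- the functional `J(v) = ∫₀¹ √(1+|Dv|²)`. -/
def Jfun (v : ℝ → ℝ) : ℝ :=
  sSup { r : ℝ | ∃ w₁ w₂ : ℝ → ℝ, ContDiff ℝ 1 w₁ ∧ ContDiff ℝ 1 w₂ ∧
    tsupport w₁ ⊆ Ioo 0 1 ∧ tsupport w₂ ⊆ Ioo 0 1 ∧
    (∀ x, w₁ x ^ 2 + w₂ x ^ 2 ≤ 1) ∧
    r = ∫ x in Ioo (0:ℝ) 1, (v x * deriv w₁ x + w₂ x) }

/-- BV-solution of the Neumann problem `(P)`. -/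
def IsBVSol (a f : ℝ → ℝ) (u : ℝ → ℝ) : Prop :=
  BoundedVariationOn u (Ioo 0 1) ∧ (∀ x ∈ Ioo (0:ℝ) 1, 0 ≤ u x) ∧
  ∀ v : ℝ → ℝ, BoundedVariationOn v (Ioo 0 1) →
    Jfun u + ∫ x in Ioo (0:ℝ) 1, a x * f (u x) * (v x - u x) ≤ Jfun v

/-- `u - u0` changes sign at `z`. -/
def ChangesSign (u : ℝ → ℝ) (u0 z : ℝ) : Prop :=
  ∃ δ > (0:ℝ), ((∀ x ∈ Ioo (z - δ) z, u x < u0) ∧ (∀ x ∈ Ioo z (z + δ), u0 < u x)) ∨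
           ((∀ x ∈ Ioo (z - δ) z, u0 < u x) ∧ (∀ x ∈ Ioo z (z + δ), u x < u0))

/-- the energy `Eₙ` along a solution of `(Pₙ)`. -/
def EnergyN (a f : ℝ → ℝ) (u0 : ℝ) (n : ℕ) (u : ℝ → ℝ) (x : ℝ) : ℝ :=
  deriv u x * phiN n (deriv u x) - PhiNBig n (deriv u x) + a x * Fprim f u0 (u x)

/-- the energy `ℰ` of `u` extends to a continuous function on `[0,1]`. -/
def HasContinuousEnergy (a f : ℝ → ℝ) (u0 : ℝ) (u : ℝ → ℝ) : Prop :=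
  ∃ E : ℝ → ℝ, ContinuousOn E (Icc 0 1) ∧
    ∀ x ∈ Ioo (0:ℝ) 1, ContinuousAt u x →
      (DifferentiableAt ℝ u x →
        E x = 1 - 1 / Real.sqrt (1 + deriv u x ^ 2) + a x * Fprim f u0 (u x)) ∧
      (¬ DifferentiableAt ℝ u x → E x = 1 + a x * Fprim f u0 (u x))

/-- the oscillatory structure of the BV-solutions of Theorem 1.1: `m` generalized
intersections with `u0`, with starting sign `σ` (`σ = 1` for case (I), `σ = -1` for case (II)). -/
def OscStructure (u0 : ℝ) (u : ℝ → ℝ) (m : ℕ) (σ : ℝ) : Prop :=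
  ∃ x : ℕ → ℝ,
    x 0 = 0 ∧ x (m + 1) = 1 ∧ (∀ i ≤ m, x i < x (i + 1)) ∧
    ContDiffOn ℝ 2 u (Ico 0 (x 1)) ∧ ContDiffOn ℝ 2 u (Ioc (x m) 1) ∧
    (∀ i, 1 ≤ i → i + 1 ≤ m → ContDiffOn ℝ 2 u (Ioo (x i) (x (i + 1)))) ∧
    derivWithin u (Icc 0 1) 0 = 0 ∧ derivWithin u (Icc 0 1) 1 = 0 ∧
    (∀ i ≤ m, ∀ y ∈ Ioo (x i) (x (i + 1)), 0 < σ * (-1 : ℝ) ^ (i + 1) * (u y - u0)) ∧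
    ∀ i, 1 ≤ i → i ≤ m →
      (u (x i) = u0 ∧ ContDiffOn ℝ 2 u (Ioo (x (i - 1)) (x (i + 1)))) ∨
      (∃ L R : ℝ, Tendsto u (𝓝[<] x i) (𝓝 L) ∧ Tendsto u (𝓝[>] x i) (𝓝 R) ∧
        (0 < σ * (-1 : ℝ) ^ (i + 1) →
          L ≤ u0 ∧ u0 ≤ R ∧ Tendsto (deriv u) (𝓝[<] x i) atTop ∧
            Tendsto (deriv u) (𝓝[>] x i) atTop) ∧
        (σ * (-1 : ℝ) ^ (i + 1) < 0 →
          R ≤ u0 ∧ u0 ≤ L ∧ Tendsto (deriv u) (𝓝[<] x i) atBot ∧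
            Tendsto (deriv u) (𝓝[>] x i) atBot))
theorem statement18 (a f : ℝ → ℝ) (u0 : ℝ)
    (ha : ContDiff ℝ 1 a) (hapos : ∀ x ∈ Icc (0:ℝ) 1, 0 < a x)
    (hf : ContDiffOn ℝ 1 f (Ici 0)) (hu0 : 0 < u0)
    (hfeq : Feq f u0) (hfsgn : Fsgn f u0)
    (us : ℕ → ℝ → ℝ) (hsol : ∀ n, IsPnSol a f n (us n))
    (M : ℝ) (hM : ∀ n, ∀ x ∈ Icc (0:ℝ) 1, |us n x| ≤ M)
    (u v : ℝ → ℝ)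
    (hvconv : TendstoUniformlyOn (fun n x => phiN n (deriv (us n) x)) v atTop (Icc 0 1))
    (α β : ℝ) (hαβ : α < β) (hsub : Icc α β ⊆ Icc (0:ℝ) 1)
    (ε : ℝ) (hε : 0 < ε) (hv : ∀ x ∈ Icc α β, |v x| ≤ 1 - ε)
    (huconv : TendstoUniformlyOn (fun n => us n) u atTop (Icc α β)) :
    ∃ ψ : ℕ → ℕ, StrictMono ψ ∧
      TendstoUniformlyOn (fun j x => deriv (us (ψ j)) x)
        (fun x => phiInv (v x)) atTop (Icc α β) ∧
      ContinuousOn (fun x => phiInv (v x)) (Icc α β) ∧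
      ∀ x ∈ Icc α β, HasDerivWithinAt u (phiInv (v x)) (Icc α β) x := by
  have hεle : ε ≤ 1 := by
    have h1 := hv α ⟨le_refl α, hαβ.le⟩
    have h2 := abs_nonneg (v α); linarith
  set c : ℝ := 1 - ε / 2 with hcdef
  set g : ℝ → ℝ := fun x => phiInv (v x) with hgdef
  have hKcont : ContinuousOn phiInv (Icc (-c) c) := by
    unfold phiInv
    apply ContinuousOn.div continuous_id.continuousOn
    · exact (Real.continuous_sqrt.comp (by continuity)).continuousOn
    · intro y hy
      have hc1 : c < 1 := by simp only [hcdef]; linarith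
      have hc0 : 0 < c := by simp only [hcdef]; linarith
      have h1 : y ^ 2 < 1 := by nlinarith [hy.1, hy.2]
      exact (Real.sqrt_pos.2 (by linarith)).ne'
  have hKuc : UniformContinuousOn phiInv (Icc (-c) c) :=
    isCompact_Icc.uniformContinuousOn_of_continuous hKcont
  have key : TendstoUniformlyOn (fun n x => deriv (us n) x) g atTop (Icc α β) := by
    rw [Metric.tendstoUniformlyOn_iff]
    intro δ hδ
    obtain ⟨η, hη, hηuc⟩ := Metric.uniformContinuousOn_iff.1 hKuc δ hδ
    have hev1 := Metric.tendstoUniformlyOn_iff.1 hvconv (min η (ε/2)) (by positivity)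
    have hev2 : ∀ᶠ n : ℕ in atTop, (1:ℝ)/((n:ℝ)+1) < ε/2 :=
      tendsto_one_div_add_atTop_nhds_zero_nat.eventually_lt_const (by positivity)
    filter_upwards [hev1, hev2] with n h1 h2 x hx
    have hx01 := hsub hx
    have hvn := h1 x hx01
    simp only [Real.dist_eq] at hvn ⊢
    have hdvn : |phiN n (deriv (us n) x) - v x| < min η (ε/2) := by
      rw [abs_sub_comm]; exact hvn
    have hmin := lt_min_iff.1 hdvn
    have hvx := hv x hx
    have hvb : |phiN n (deriv (us n) x)| ≤ c := by
      have h3 := abs_sub_abs_le_abs_sub (phiN n (deriv (us n) x)) (v x)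
      simp only [hcdef]; linarith [hmin.2]
    have hcn : c < phi n := lt_of_lt_of_le (by simp only [hcdef]; linarith) (phi_nat_ge n)
    have hs := phiN_inv hvb hcn
    rw [hs]
    have hmem1 : v x ∈ Icc (-c) c := abs_le.1 (le_trans hvx (by simp only [hcdef]; linarith))
    have hmem2 : phiN n (deriv (us n) x) ∈ Icc (-c) c := abs_le.1 hvb
    have h4 := hηuc _ hmem1 _ hmem2 (by rw [Real.dist_eq]; exact lt_of_lt_of_le hvn (min_le_left _ _))
    rw [Real.dist_eq] at h4
    exact h4
  have hgcont : ContinuousOn g (Icc α β) :=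
    key.continuousOn (Frequently.of_forall fun n =>
      ((hsol n).1.continuous_deriv (by norm_num)).continuousOn)
  have hint : ∀ x ∈ Icc α β, u x = u α + ∫ t in α..x, g t := by
    intro x hx
    have hax : α ≤ x := hx.1
    have hαmem : α ∈ Icc α β := ⟨le_refl α, hαβ.le⟩
    obtain ⟨C, hC⟩ := isCompact_Icc.exists_bound_of_continuousOn hgcont
    have hev := Metric.tendstoUniformlyOn_iff.1 key 1 one_pos
    have hIsub : Set.uIoc α x ⊆ Icc α β := by
      rw [uIoc_of_le hax]
      exact fun t ht => ⟨ht.1.le, le_trans ht.2 hx.2⟩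
    have T2 : Tendsto (fun n => ∫ t in α..x, deriv (us n) t) atTop
        (𝓝 (∫ t in α..x, g t)) := by
      apply intervalIntegral.tendsto_integral_filter_of_dominated_convergence (fun _ => C + 1)
      · exact Eventually.of_forall fun n =>
          ((hsol n).1.continuous_deriv (by norm_num)).aestronglyMeasurable.restrict
      · filter_upwards [hev] with n hn
        refine ae_of_all _ fun t ht => ?_
        have htm := hIsub ht
        have h1 := hn t htm
        have h2 := hC t htm
        rw [Real.dist_eq, abs_sub_comm] at h1
        rw [Real.norm_eq_abs] at h2 ⊢
        have h3 := abs_sub_abs_le_abs_sub (deriv (us n) t) (g t)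
        linarith
      · exact intervalIntegrable_const
      · exact ae_of_all _ fun t ht => key.tendsto_at (hIsub ht)
    have T1 : Tendsto (fun n => us n x - us n α) atTop (𝓝 (u x - u α)) :=
      (huconv.tendsto_at hx).sub (huconv.tendsto_at hαmem)
    have heqn : ∀ n : ℕ, us n x - us n α = ∫ t in α..x, deriv (us n) t := fun n =>
      (intervalIntegral.integral_deriv_eq_sub
        (fun t _ => ((hsol n).1.differentiable (by norm_num)).differentiableAt)
        (((hsol n).1.continuous_deriv (by norm_num)).intervalIntegrable _ _)).symm
    have huniq : u x - u α = ∫ t in α..x, g t :=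
      tendsto_nhds_unique (by simpa only [heqn] using T1) T2
    linarith
  have hclamp : ∀ t : ℝ, min (max t α) β ∈ Icc α β := fun t =>
    ⟨le_min (le_max_right t α) hαβ.le, min_le_right _ _⟩
  have hGcont : Continuous (fun t => g (min (max t α) β)) :=
    hgcont.comp_continuous (by continuity) hclamp
  have hGeq : ∀ t ∈ Icc α β, g (min (max t α) β) = g t := fun t ht => by
    rw [max_eq_left ht.1, min_eq_left ht.2]
  have hhd : ∀ x : ℝ, HasDerivAt (fun y => u α + ∫ t in α..y, g (min (max t α) β))
      ((fun t => g (min (max t α) β)) x) x := fun x =>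
    ((hGcont.integral_hasStrictDerivAt α x).hasDerivAt).const_add (u α)
  refine ⟨id, strictMono_id, key, hgcont, fun x hx => ?_⟩
  have hueq : ∀ y ∈ Icc α β, u y = u α + ∫ t in α..y, g (min (max t α) β) := by
    intro y hy
    rw [hint y hy]
    congr 1
    refine intervalIntegral.integral_congr fun t ht => ?_
    rw [uIcc_of_le hy.1] at ht
    exact (hGeq t ⟨ht.1, ht.2.trans hy.2⟩).symm
  have hfinal := (hhd x).hasDerivWithinAt.congr hueq (hueq x hx)
  simpa only [hGeq x hx] using hfinal
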